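/- arXiv:0806.4857 — 4 statements merged into one kernel-verified Lean document; each statement's English description precedes it below -/
import Mathlib

section
/- Let B ⊂ ℝⁿ be a measurable set with |B| ≤ 1 and let b : B → ℝ be measurable with ∫_B exp(|b(x)|) dx ≤ 2. Then there exists a constant C (independent of B, b, ψ) such that for every integrable function ψ on B, ‖bψ‖_{L^Φ(B)} ≤ C ∫_B |ψ| dx, where Φ(t) = t/log(e+t) and ‖·‖_{L^Φ(B)} is the Luxemburg functional inf{k>0 : ∫_B Φ(|bψ|/k) dx ≤ 1}. -/
open Real MeasureTheory
open scoped ENNReal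

/-- The Orlicz function Φ(t) = t / log(e + t). -/
noncomputable def Phi (t : ℝ) : ℝ := t / Real.log (Real.exp 1 + t)

/-- The Luxemburg functional for real-valued functions. -/
noncomputable def luxNorm {n : ℕ} (μ : Measure (EuclideanSpace ℝ (Fin n)))
    (f : EuclideanSpace ℝ (Fin n) → ℝ) : ℝ≥0∞ :=
  sInf (ENNReal.ofReal ''
    {k : ℝ | 0 < k ∧ ∫⁻ x, ENNReal.ofReal (Phi (|f x| / k)) ∂μ ≤ 1})

lemma log_ge_one (t : ℝ) (ht : 0 ≤ t) : 1 ≤ Real.log (Real.exp 1 + t) := by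
  have h := Real.log_le_log (Real.exp_pos 1) (by linarith : Real.exp 1 ≤ Real.exp 1 + t)
  rwa [Real.log_exp] at h

lemma key_ineq (a v : ℝ) (ha : 0 ≤ a) (hv : 0 ≤ v) :
    Phi (a * v) ≤ Real.exp a / 4 + 3 * v := by
  have htv : 0 ≤ a * v := mul_nonneg ha hv
  have hL1 : 1 ≤ Real.log (Real.exp 1 + a * v) := log_ge_one _ htv
  have hPhi_le : Phi (a * v) ≤ a * v := by
    unfold Phi
    rw [div_le_iff₀ (by linarith)]
    nlinarith
  rcases le_or_gt (a * v) (Real.exp a / 4) with h | h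
  · have h3v : 0 ≤ 3 * v := by positivity
    linarith
  · rcases le_or_gt a 3 with h3 | h3
    · have hav : a * v ≤ 3 * v := mul_le_mul_of_nonneg_right h3 hv
      have he : 0 ≤ Real.exp a / 4 := by positivity
      linarith
    · have hlog4 : Real.log 4 ≤ 2 := by
        have h2 := Real.log_le_sub_one_of_pos (show (0:ℝ) < 2 by norm_num)
        have h4 : (4:ℝ) = 2 * 2 := by norm_num
        rw [h4, Real.log_mul (by norm_num) (by norm_num)]
        linarith
      have hden : 0 < a - Real.log 4 := by linarith
      have hLge : a - Real.log 4 ≤ Real.log (Real.exp 1 + a * v) := by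
        have h1 : Real.exp a / 4 ≤ Real.exp 1 + a * v := by
          have := Real.exp_pos 1; linarith
        have h2 : Real.log (Real.exp a / 4) = a - Real.log 4 := by
          rw [Real.log_div (Real.exp_pos a).ne' (by norm_num), Real.log_exp]
        rw [← h2]
        exact Real.log_le_log (by positivity) h1
      have hstep : Phi (a * v) ≤ a * v / (a - Real.log 4) := by
        unfold Phi
        gcongr
      have hfin : a * v / (a - Real.log 4) ≤ 3 * v := by
        rw [div_le_iff₀ hden]
        nlinarith
      have he : 0 ≤ Real.exp a / 4 := by positivity
      linarith

theorem luxNorm_mul_le_of_exp_integrable (n : ℕ) (hn : 1 ≤ n) :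
    ∃ C > (0 : ℝ), ∀ (B : Set (EuclideanSpace ℝ (Fin n)))
      (b ψ : EuclideanSpace ℝ (Fin n) → ℝ),
      MeasurableSet B → volume B ≤ 1 → Measurable b → Measurable ψ →
      (∫⁻ x in B, ENNReal.ofReal (Real.exp |b x|)) ≤ 2 →
      IntegrableOn ψ B volume →
      luxNorm (volume.restrict B) (fun x => b x * ψ x) ≤
        ENNReal.ofReal (C * ∫ x in B, |ψ x|) := by
  refine ⟨6, by norm_num, fun B b ψ hB hBvol hb hψm hbexp hψ => ?_⟩
  set M : ℝ := ∫ x in B, |ψ x| with hM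
  have hψabs : IntegrableOn (fun x => |ψ x|) B volume := hψ.abs
  have hMnonneg : 0 ≤ M := integral_nonneg fun x => abs_nonneg _
  rcases eq_or_lt_of_le hMnonneg with hM0 | hMpos
  · -- M = 0 : ψ = 0 a.e. on B, luxNorm is 0
    have hψ0 : (fun x => |ψ x|) =ᵐ[volume.restrict B] 0 := by
      rw [← integral_eq_zero_iff_of_nonneg (fun x => abs_nonneg _) hψabs]
      exact hM0.symm
    have hzero : ∀ k : ℝ, 0 < k →
        (∫⁻ x, ENNReal.ofReal (Phi (|b x * ψ x| / k)) ∂(volume.restrict B)) ≤ 1 := by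
      intro k hk
      have : (fun x => ENNReal.ofReal (Phi (|b x * ψ x| / k)))
          =ᵐ[volume.restrict B] 0 := by
        filter_upwards [hψ0] with x hx
        have hψx : ψ x = 0 := abs_eq_zero.mp hx
        simp [hψx, Phi]
      rw [lintegral_congr_ae this]
      simp
    have hle : ∀ ε : ℝ, 0 < ε →
        luxNorm (volume.restrict B) (fun x => b x * ψ x) ≤ ENNReal.ofReal ε := by
      intro ε hε
      exact sInf_le ⟨ε, ⟨hε, hzero ε hε⟩, rfl⟩
    have hlux0 : luxNorm (volume.restrict B) (fun x => b x * ψ x) = 0 := by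
      refine le_antisymm ?_ (zero_le)
      refine ENNReal.le_of_forall_pos_le_add fun ε hε _ => ?_
      have := hle ε (by exact_mod_cast hε)
      simpa [ENNReal.ofReal_coe_nnreal] using this
    rw [hlux0, ← hM0]
    simp
  · -- M > 0 : show 6M is in the set
    have h6M : 0 < 6 * M := by linarith
    have hbound : (∫⁻ x, ENNReal.ofReal (Phi (|b x * ψ x| / (6 * M)))
        ∂(volume.restrict B)) ≤ 1 := by
      have hpt : ∀ x, ENNReal.ofReal (Phi (|b x * ψ x| / (6 * M))) ≤
          ENNReal.ofReal (Real.exp |b x| / 4) + ENNReal.ofReal (|ψ x| / (2 * M)) := by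
        intro x
        have harg : |b x * ψ x| / (6 * M) = |b x| * (|ψ x| / (6 * M)) := by
          rw [abs_mul, mul_div_assoc]
        have hk := key_ineq |b x| (|ψ x| / (6 * M)) (abs_nonneg _)
          (by positivity)
        have h3 : 3 * (|ψ x| / (6 * M)) = |ψ x| / (2 * M) := by
          field_simp
          ring
        rw [harg]
        rw [h3] at hk
        calc ENNReal.ofReal (Phi (|b x| * (|ψ x| / (6 * M))))
            ≤ ENNReal.ofReal (Real.exp |b x| / 4 + |ψ x| / (2 * M)) :=
              ENNReal.ofReal_le_ofReal hk
          _ = ENNReal.ofReal (Real.exp |b x| / 4) + ENNReal.ofReal (|ψ x| / (2 * M)) :=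
              ENNReal.ofReal_add (by positivity) (by positivity)
      calc (∫⁻ x, ENNReal.ofReal (Phi (|b x * ψ x| / (6 * M))) ∂(volume.restrict B))
          ≤ ∫⁻ x, (ENNReal.ofReal (Real.exp |b x| / 4)
              + ENNReal.ofReal (|ψ x| / (2 * M))) ∂(volume.restrict B) :=
            lintegral_mono hpt
        _ = (∫⁻ x, ENNReal.ofReal (Real.exp |b x| / 4) ∂(volume.restrict B))
            + ∫⁻ x, ENNReal.ofReal (|ψ x| / (2 * M)) ∂(volume.restrict B) := by
            apply lintegral_add_left
            exact (ENNReal.measurable_ofReal.comp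
              ((measurable_exp.comp hb.abs).div_const 4))
        _ ≤ ENNReal.ofReal (1/2) + ENNReal.ofReal (1/2) := by
            gcongr
            · -- first term ≤ 1/2
              have heq : ∀ x : EuclideanSpace ℝ (Fin n),
                  ENNReal.ofReal (Real.exp |b x| / 4) =
                  ENNReal.ofReal (Real.exp |b x|) * ENNReal.ofReal (4:ℝ)⁻¹ := by
                intro x
                rw [div_eq_mul_inv, ENNReal.ofReal_mul (Real.exp_pos _).le]
              simp_rw [heq]
              have hmeas : Measurable (fun x : EuclideanSpace ℝ (Fin n) =>
                  ENNReal.ofReal (Real.exp |b x|)) := by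
                exact ENNReal.measurable_ofReal.comp (measurable_exp.comp hb.abs)
              rw [lintegral_mul_const'' _ hmeas.aemeasurable]
              calc (∫⁻ x in B, ENNReal.ofReal (Real.exp |b x|)) * ENNReal.ofReal (4:ℝ)⁻¹
                  ≤ 2 * ENNReal.ofReal (4:ℝ)⁻¹ := by gcongr
                _ = ENNReal.ofReal (1/2) := by
                    rw [show (2:ℝ≥0∞) = ENNReal.ofReal 2 by simp,
                      ← ENNReal.ofReal_mul (by norm_num)]
                    norm_num
            · -- second term ≤ 1/2
              have heq : ∀ x : EuclideanSpace ℝ (Fin n),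
                  ENNReal.ofReal (|ψ x| / (2 * M)) =
                  ENNReal.ofReal |ψ x| * ENNReal.ofReal (2 * M)⁻¹ := by
                intro x
                rw [div_eq_mul_inv, ENNReal.ofReal_mul (abs_nonneg _)]
              simp_rw [heq]
              have hmeas : Measurable (fun x : EuclideanSpace ℝ (Fin n) =>
                  ENNReal.ofReal |ψ x|) := by
                exact ENNReal.measurable_ofReal.comp hψm.abs
              rw [lintegral_mul_const'' _ hmeas.aemeasurable]
              have hint : (∫⁻ x in B, ENNReal.ofReal |ψ x|) = ENNReal.ofReal M := by
                rw [← ofReal_integral_eq_lintegral_ofReal hψabs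
                  (Filter.Eventually.of_forall fun x => abs_nonneg _)]
              rw [hint, ← ENNReal.ofReal_mul hMnonneg]
              apply ENNReal.ofReal_le_ofReal
              rw [mul_inv, ← mul_assoc]
              rw [mul_comm M (2:ℝ)⁻¹, mul_assoc, mul_inv_cancel₀ (ne_of_gt hMpos)]
              norm_num
        _ = 1 := by
            rw [← ENNReal.ofReal_add (by norm_num) (by norm_num)]
            norm_num
    exact sInf_le ⟨6 * M, ⟨h6M, hbound⟩, rfl⟩
end

section
/- Let 0 < γ and k ≥ γ an integer. There exists a constant C such that for every f in the inhomogeneous Lipschitz space Λ_γ(ℝⁿ) (with 0 < γ < 1, so Λ_γ consists of bounded functions with |f(x)−f(y)| ≤ ‖f‖·|x−y|^γ) and every ball B ⊂ ℝⁿ, (1/|B|) ∫_B |f(x) − P_B^k f(x)| dx ≤ C ‖f‖_{Λ_γ} |B|^{γ/n}, where P_B^k f is the L²(B)-orthogonal projection of f onto polynomials of degree ≤ k. -/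
open Real MeasureTheory Metric

/-- Key abstract estimate: if `∫ g² = ∫ g·h` (projection identity) and `|h| ≤ ε`
on `B`, then `∫ |g| ≤ μ(B)·ε`. -/
lemma lip_aux {α : Type*} [MeasurableSpace α] (μ : Measure α) (B : Set α)
    (hB : MeasurableSet B) (hμ : μ B ≠ ⊤) (g h : α → ℝ) (ε : ℝ) (hε : 0 ≤ ε)
    (hg : IntegrableOn g B μ) (hg2 : IntegrableOn (fun x => g x ^ 2) B μ)
    (hgh : IntegrableOn (fun x => g x * h x) B μ)
    (hh2 : IntegrableOn (fun x => h x ^ 2) B μ)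
    (heq : ∫ x in B, g x ^ 2 ∂μ = ∫ x in B, g x * h x ∂μ)
    (hhb : ∀ x ∈ B, |h x| ≤ ε) :
    ∫ x in B, |g x| ∂μ ≤ (μ B).toReal * ε := by
  set V := (μ B).toReal with hV
  have hV0 : 0 ≤ V := ENNReal.toReal_nonneg
  have e2 : ∫ x in B, g x * h x ∂μ ≤ ∫ x in B, (g x ^ 2 / 2 + h x ^ 2 / 2) ∂μ := by
    refine setIntegral_mono_on hgh ((hg2.div_const 2).add (hh2.div_const 2)) hB ?_
    intro x _
    nlinarith [sq_nonneg (g x - h x)]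
  rw [integral_add (hg2.div_const 2) (hh2.div_const 2), integral_div, integral_div] at e2
  have e3 : ∫ x in B, h x ^ 2 ∂μ ≤ V * ε ^ 2 := by
    have step : ∫ x in B, h x ^ 2 ∂μ ≤ ∫ _x in B, ε ^ 2 ∂μ := by
      refine setIntegral_mono_on hh2 (integrableOn_const hμ) hB ?_
      intro x hx
      calc h x ^ 2 = |h x| ^ 2 := (sq_abs _).symm
        _ ≤ ε ^ 2 := pow_le_pow_left₀ (abs_nonneg _) (hhb x hx) 2
    rwa [setIntegral_const, smul_eq_mul] at step
  have e4 : ∫ x in B, g x ^ 2 ∂μ ≤ V * ε ^ 2 := by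
    rw [heq]; linarith [e2, e3, heq]
  rcases eq_or_lt_of_le hε with hε0 | hεpos
  · -- ε = 0
    have hnn : 0 ≤ ∫ x in B, g x ^ 2 ∂μ :=
      setIntegral_nonneg hB fun x _ => sq_nonneg _
    have hz : ∫ x in B, g x ^ 2 ∂μ = 0 := by
      refine le_antisymm ?_ hnn
      simpa [← hε0] using e4
    have hae : (fun x => g x ^ 2) =ᵐ[μ.restrict B] 0 :=
      (integral_eq_zero_iff_of_nonneg (fun x => sq_nonneg _) hg2).mp hz
    have hae' : (fun x => |g x|) =ᵐ[μ.restrict B] (fun _ => (0:ℝ)) := by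
      filter_upwards [hae] with x hx
      have hx0 : g x = 0 := by
        have h := hx
        simp only [Pi.zero_apply] at h
        exact pow_eq_zero_iff (two_ne_zero) |>.mp h
      simp [hx0]
    rw [integral_congr_ae hae', integral_const, smul_eq_mul, mul_zero]
    positivity
  · -- ε > 0
    have hcε : IntegrableOn (fun _ : α => ε / 2) B μ :=
      integrableOn_const hμ
    have step : ∫ x in B, |g x| ∂μ ≤
        ∫ x in B, (ε / 2 + (2 * ε)⁻¹ * g x ^ 2) ∂μ := by
      refine setIntegral_mono_on hg.abs (hcε.add (hg2.const_mul _)) hB ?_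
      intro x _
      have hid : ε / 2 + (2 * ε)⁻¹ * g x ^ 2 - |g x| = (2 * ε)⁻¹ * (|g x| - ε) ^ 2 := by
        have ha : g x ^ 2 = |g x| ^ 2 := (sq_abs _).symm
        rw [ha]
        have h2ε : (2 * ε) ≠ 0 := by positivity
        field_simp
        ring
      have : 0 ≤ ε / 2 + (2 * ε)⁻¹ * g x ^ 2 - |g x| := by
        rw [hid]; positivity
      linarith
    have hmul : ∫ a in B, (2 * ε)⁻¹ * g a ^ 2 ∂μ =
        (2 * ε)⁻¹ * ∫ a in B, g a ^ 2 ∂μ := by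
      simpa [smul_eq_mul] using
        integral_smul (μ := μ.restrict B) ((2 * ε)⁻¹) (fun a => g a ^ 2)
    rw [integral_add hcε (hg2.const_mul _), setIntegral_const, smul_eq_mul,
      hmul] at step
    have h6 : (2 * ε)⁻¹ * ∫ x in B, g x ^ 2 ∂μ ≤ (2 * ε)⁻¹ * (V * ε ^ 2) :=
      mul_le_mul_of_nonneg_left e4 (inv_nonneg.2 (by linarith))
    have h7 : (2 * ε)⁻¹ * (V * ε ^ 2) = V * (ε / 2) := by
      field_simp
    calc ∫ x in B, |g x| ∂μ ≤ V * (ε / 2) + (2 * ε)⁻¹ * ∫ x in B, g x ^ 2 ∂μ := step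
      _ ≤ V * (ε / 2) + V * (ε / 2) := by rw [← h7]; linarith
      _ = V * ε := by ring

/-- Campanato-type estimate: for f in the inhomogeneous Lipschitz space Λ_γ
(with norm N + L, where N bounds |f| and L is the γ-Hölder constant), the mean
of |f − P_B^k f| over a ball B is ≤ C‖f‖_{Λ_γ}|B|^{γ/n}.  The L²(B)-projection
P_B^k f is characterized by the orthogonality relations. -/
theorem lipschitz_poly_approx (n k : ℕ) (hn : 1 ≤ n) (γ : ℝ)
    (hγ0 : 0 < γ) (hγ1 : γ < 1) (hk : γ ≤ (k : ℝ)) :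
    ∃ C > (0 : ℝ), ∀ (f : EuclideanSpace ℝ (Fin n) → ℝ) (N L : ℝ),
      Continuous f →
      (∀ x, |f x| ≤ N) →
      (∀ x y, |f x - f y| ≤ L * dist x y ^ γ) →
      ∀ (c : EuclideanSpace ℝ (Fin n)) (r : ℝ), 0 < r →
        ∀ P : MvPolynomial (Fin n) ℝ, P.totalDegree ≤ k →
          (∀ Q : MvPolynomial (Fin n) ℝ, Q.totalDegree ≤ k →
            ∫ x in ball c r,
              (f x - MvPolynomial.eval (fun i => x i) P) *
                MvPolynomial.eval (fun i => x i) Q = 0) →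
          ((volume (ball c r)).toReal)⁻¹ *
              ∫ x in ball c r, |f x - MvPolynomial.eval (fun i => x i) P| ≤
            C * (N + L) * (volume (ball c r)).toReal ^ (γ / n) := by
  have hnR : (0 : ℝ) < n := by exact_mod_cast hn
  set ω := (volume (ball (0 : EuclideanSpace ℝ (Fin n)) 1)).toReal with hωdef
  have hω : 0 < ω := by
    have := Fact.mk hn
    exact ENNReal.toReal_pos (measure_ball_pos volume _ one_pos).ne' measure_ball_lt_top.ne
  refine ⟨ω ^ (-(γ / (n : ℝ))), by positivity, ?_⟩
  intro f N L hf hN hL c r hr P hP horth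
  have hpc : Continuous (fun x : EuclideanSpace ℝ (Fin n) =>
      MvPolynomial.eval (fun i => x i) P) :=
    P.continuous_eval.comp (continuous_pi fun i => (EuclideanSpace.proj i).continuous)
  have hgc : Continuous (fun x : EuclideanSpace ℝ (Fin n) =>
      f x - MvPolynomial.eval (fun i => x i) P) := hf.sub hpc
  have hI : ∀ h : EuclideanSpace ℝ (Fin n) → ℝ, Continuous h →
      IntegrableOn h (ball c r) volume :=
    fun h hc => (hc.continuousOn.integrableOn_compact
      (isCompact_closedBall c r)).mono_set ball_subset_closedBall
  have hN0 : 0 ≤ N := le_trans (abs_nonneg _) (hN c)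
  have hL0 : 0 ≤ L := by
    set e := EuclideanSpace.single (⟨0, hn⟩ : Fin n) (1 : ℝ) with he
    have hd : dist (c + e) c = 1 := by
      simp [dist_eq_norm, he, EuclideanSpace.norm_single]
    have h := hL (c + e) c
    rw [hd, Real.one_rpow, mul_one] at h
    exact le_trans (abs_nonneg _) h
  have h1 : ∫ x in ball c r,
      (f x - MvPolynomial.eval (fun i => x i) P) *
        MvPolynomial.eval (fun i => x i) P = 0 := horth P hP
  have h2 : ∫ x in ball c r,
      (f x - MvPolynomial.eval (fun i => x i) P) * f c = 0 := by
    have h := horth (MvPolynomial.C (f c)) (by simp)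
    simpa using h
  have heq : ∫ x in ball c r, (f x - MvPolynomial.eval (fun i => x i) P) ^ 2 =
      ∫ x in ball c r,
        (f x - MvPolynomial.eval (fun i => x i) P) * (f x - f c) := by
    have hs := integral_sub (μ := volume.restrict (ball c r))
      (f := fun x => (f x - MvPolynomial.eval (fun i => x i) P) * (f x - f c))
      (g := fun x => (f x - MvPolynomial.eval (fun i => x i) P) *
          MvPolynomial.eval (fun i => x i) P -
        (f x - MvPolynomial.eval (fun i => x i) P) * f c)
      (hI _ (hgc.mul (hf.sub continuous_const)))
      ((hI _ (hgc.mul hpc)).sub (hI _ (hgc.mul continuous_const)))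
    have hpt : ∀ x : EuclideanSpace ℝ (Fin n),
        (f x - MvPolynomial.eval (fun i => x i) P) * (f x - f c) -
          ((f x - MvPolynomial.eval (fun i => x i) P) *
              MvPolynomial.eval (fun i => x i) P -
            (f x - MvPolynomial.eval (fun i => x i) P) * f c) =
        (f x - MvPolynomial.eval (fun i => x i) P) ^ 2 := by
      intro x; ring
    simp only [hpt] at hs
    have hs2 := integral_sub (hI _ (hgc.mul hpc))
      (hI _ (hgc.mul (continuous_const : Continuous fun _ : EuclideanSpace ℝ (Fin n) => f c)))
    simp only [Pi.mul_apply] at hs2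
    rw [hs, hs2, h1, h2]
    ring
  have hbound : ∀ x ∈ ball c r, |f x - f c| ≤ L * r ^ γ := by
    intro x hx
    refine le_trans (hL x c) ?_
    exact mul_le_mul_of_nonneg_left
      (Real.rpow_le_rpow dist_nonneg (le_of_lt (mem_ball.mp hx)) hγ0.le) hL0
  have habs := lip_aux volume (ball c r) measurableSet_ball measure_ball_lt_top.ne
    (fun x => f x - MvPolynomial.eval (fun i => x i) P) (fun x => f x - f c)
    (L * r ^ γ) (by positivity) (hI _ hgc) (hI _ (hgc.pow 2))
    (hI _ (hgc.mul (hf.sub continuous_const)))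
    (hI _ ((hf.sub continuous_const).pow 2)) heq hbound
  -- volume computation
  have hV : (volume (ball c r)).toReal = r ^ n * ω := by
    rw [Measure.addHaar_ball_of_pos volume c hr, finrank_euclideanSpace_fin,
      ENNReal.toReal_mul, ENNReal.toReal_ofReal (by positivity)]
  have hVpos : 0 < (volume (ball c r)).toReal := by rw [hV]; positivity
  have h5 : ((volume (ball c r)).toReal)⁻¹ *
      ∫ x in ball c r, |f x - MvPolynomial.eval (fun i => x i) P| ≤ L * r ^ γ := by
    rw [inv_mul_le_iff₀ hVpos]
    exact habs
  have hpow : (volume (ball c r)).toReal ^ (γ / (n : ℝ)) =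
      r ^ γ * ω ^ (γ / (n : ℝ)) := by
    rw [hV, Real.mul_rpow (by positivity) hω.le, ← Real.rpow_natCast r n,
      ← Real.rpow_mul hr.le]
    congr 1
    field_simp
  have hRHS : ω ^ (-(γ / (n : ℝ))) * (N + L) *
      (volume (ball c r)).toReal ^ (γ / (n : ℝ)) = (N + L) * r ^ γ := by
    rw [hpow, show ω ^ (-(γ / (n : ℝ))) * (N + L) * (r ^ γ * ω ^ (γ / (n : ℝ))) =
        (N + L) * r ^ γ * (ω ^ (-(γ / (n : ℝ))) * ω ^ (γ / (n : ℝ))) from by ring,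
      ← Real.rpow_add hω, neg_add_cancel, Real.rpow_zero, mul_one]
  refine le_trans h5 ?_
  rw [hRHS]
  have hrγ : 0 ≤ r ^ γ := by positivity
  nlinarith
end

section
/- Let φ be bounded on ℝⁿ and belong to lmo(ℝⁿ), i.e. sup_{|B|≤1} (log(e+1/|B|)/|B|)∫_B |φ − φ_B| dx < ∞ and sup_{|B|≥1} (1/|B|)∫_B |φ| dx < ∞. Then for every b in bmo(ℝⁿ), the pointwise product bφ belongs to bmo(ℝⁿ), with ‖bφ‖_{bmo} ≤ C (‖φ‖_∞ + ‖φ‖_{lmo}) ‖b‖_{bmo}. -/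
open Real MeasureTheory Metric

/-- The average of b over the ball of center c and radius r. -/
noncomputable def avgBall {n : ℕ} (b : EuclideanSpace ℝ (Fin n) → ℝ)
    (c : EuclideanSpace ℝ (Fin n)) (r : ℝ) : ℝ :=
  ((volume (ball c r)).toReal)⁻¹ * ∫ x in ball c r, b x

section Aux

variable {n : ℕ}

lemma volpos (c : EuclideanSpace ℝ (Fin n)) {r : ℝ} (hr : 0 < r) :
    0 < (volume (ball c r)).toReal :=
  ENNReal.toReal_pos (measure_ball_pos volume c hr).ne' measure_ball_lt_top.ne

lemma intOn {f : EuclideanSpace ℝ (Fin n) → ℝ} (hf : LocallyIntegrable f volume)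
    (c : EuclideanSpace ℝ (Fin n)) (r : ℝ) : IntegrableOn f (ball c r) volume :=
  (hf.integrableOn_isCompact (isCompact_closedBall c r)).mono_set ball_subset_closedBall

lemma constIntOn (c : EuclideanSpace ℝ (Fin n)) (r : ℝ) (d : ℝ) :
    IntegrableOn (fun _ => d) (ball c r) volume :=
  integrableOn_const measure_ball_lt_top.ne

lemma abs_avg_sub_le {f : EuclideanSpace ℝ (Fin n) → ℝ}
    {c : EuclideanSpace ℝ (Fin n)} {r : ℝ} (hr : 0 < r)
    (hf : IntegrableOn f (ball c r) volume) (d : ℝ) :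
    |avgBall f c r - d| ≤ ((volume (ball c r)).toReal)⁻¹ * ∫ x in ball c r, |f x - d| := by
  have hV : 0 < (volume (ball c r)).toReal := volpos c hr
  have h1 : ∫ x in ball c r, (f x - d) ∂volume
      = (∫ x in ball c r, f x) - (volume (ball c r)).toReal * d := by
    rw [integral_sub hf (constIntOn c r d), setIntegral_const, smul_eq_mul]; rfl
  have h2 : avgBall f c r - d
      = ((volume (ball c r)).toReal)⁻¹ * ∫ x in ball c r, (f x - d) := by
    rw [h1, avgBall]; field_simp
  rw [h2, abs_mul, abs_of_nonneg (inv_nonneg.2 hV.le)]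
  refine mul_le_mul_of_nonneg_left ?_ (inv_nonneg.2 hV.le)
  simpa [Real.norm_eq_abs] using
    norm_integral_le_integral_norm (μ := volume.restrict (ball c r)) (fun x => f x - d)

lemma osc_le {f : EuclideanSpace ℝ (Fin n) → ℝ}
    {c : EuclideanSpace ℝ (Fin n)} {r : ℝ} (hr : 0 < r)
    (hf : IntegrableOn f (ball c r) volume) (d : ℝ) :
    ((volume (ball c r)).toReal)⁻¹ * ∫ x in ball c r, |f x - avgBall f c r| ≤
      2 * (((volume (ball c r)).toReal)⁻¹ * ∫ x in ball c r, |f x - d|) := by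
  have hV : 0 < (volume (ball c r)).toReal := volpos c hr
  set V := (volume (ball c r)).toReal
  set A := avgBall f c r with hA
  have key : |A - d| ≤ V⁻¹ * ∫ x in ball c r, |f x - d| := abs_avg_sub_le hr hf d
  have hint : IntegrableOn (fun x => |f x - d|) (ball c r) volume :=
    (hf.sub (constIntOn c r d)).abs
  have hintA : IntegrableOn (fun x => |f x - A|) (ball c r) volume :=
    (hf.sub (constIntOn c r A)).abs
  have h2 : ∫ x in ball c r, |f x - A| ≤
      ∫ x in ball c r, (|f x - d| + |A - d|) := by
    refine setIntegral_mono_on hintA (hint.add (constIntOn c r _)) measurableSet_ball ?_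
    intro x _
    calc |f x - A| = |(f x - d) + (d - A)| := by rw [sub_add_sub_cancel]
      _ ≤ |f x - d| + |d - A| := abs_add_le _ _
      _ = |f x - d| + |A - d| := by rw [abs_sub_comm d A]
  have h3 : ∫ x in ball c r, (|f x - d| + |A - d|)
      = (∫ x in ball c r, |f x - d|) + V * |A - d| := by
    rw [integral_add hint (constIntOn c r _), setIntegral_const, smul_eq_mul]; rfl
  set I := ∫ x in ball c r, |f x - d|
  have h4 : V⁻¹ * ∫ x in ball c r, |f x - A| ≤ V⁻¹ * (I + V * |A - d|) := by
    refine mul_le_mul_of_nonneg_left ?_ (inv_nonneg.2 hV.le)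
    rw [← h3]; exact h2
  have h5 : V⁻¹ * (I + V * |A - d|) = V⁻¹ * I + |A - d| := by
    field_simp
  calc V⁻¹ * ∫ x in ball c r, |f x - A| ≤ V⁻¹ * I + |A - d| := by rw [← h5]; exact h4
    _ ≤ V⁻¹ * I + V⁻¹ * I := by linarith [key]
    _ = 2 * (V⁻¹ * I) := by ring

lemma vol_eq (c : EuclideanSpace ℝ (Fin n)) {r : ℝ} (hr : 0 < r) :
    (volume (ball c r)).toReal
      = r ^ n * (volume (ball (0 : EuclideanSpace ℝ (Fin n)) 1)).toReal := by
  rw [Measure.addHaar_ball_of_pos volume c hr, ENNReal.toReal_mul,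
    ENNReal.toReal_ofReal (by positivity), finrank_euclideanSpace_fin]

lemma vol_double (c : EuclideanSpace ℝ (Fin n)) {r : ℝ} (hr : 0 < r) :
    (volume (ball c (2 * r))).toReal = 2 ^ n * (volume (ball c r)).toReal := by
  rw [vol_eq c (by positivity : (0:ℝ) < 2 * r), vol_eq c hr, mul_pow]
  ring

lemma vol_pow (c : EuclideanSpace ℝ (Fin n)) {r : ℝ} (hr : 0 < r) (k : ℕ) :
    (volume (ball c ((2:ℝ) ^ k * r))).toReal
      = ((2:ℝ) ^ n) ^ k * (volume (ball c r)).toReal := by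
  induction k with
  | zero => simp
  | succ k ih =>
    have h : (2:ℝ) ^ (k+1) * r = 2 * ((2:ℝ) ^ k * r) := by ring
    rw [h, vol_double c (by positivity), ih]
    ring

lemma avg_double {b : EuclideanSpace ℝ (Fin n) → ℝ}
    {c : EuclideanSpace ℝ (Fin n)} {r : ℝ} (hr : 0 < r)
    (h1 : IntegrableOn b (ball c r) volume)
    (h2 : IntegrableOn b (ball c (2*r)) volume) :
    |avgBall b c r - avgBall b c (2*r)| ≤
      2 ^ n * (((volume (ball c (2*r))).toReal)⁻¹ *
        ∫ x in ball c (2*r), |b x - avgBall b c (2*r)|) := by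
  have hV1 : 0 < (volume (ball c r)).toReal := volpos c hr
  have key := abs_avg_sub_le hr h1 (avgBall b c (2*r))
  have hmono : ∫ x in ball c r, |b x - avgBall b c (2*r)| ≤
      ∫ x in ball c (2*r), |b x - avgBall b c (2*r)| := by
    refine setIntegral_mono_set ((h2.sub (constIntOn c (2*r) _)).abs) ?_ ?_
    · filter_upwards with x using abs_nonneg _
    · exact HasSubset.Subset.eventuallyLE (ball_subset_ball (by linarith))
  have h2n : (0:ℝ) < 2 ^ n := by positivity
  calc |avgBall b c r - avgBall b c (2*r)|
      ≤ ((volume (ball c r)).toReal)⁻¹ * ∫ x in ball c (2*r), |b x - avgBall b c (2*r)| := by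
        refine key.trans (mul_le_mul_of_nonneg_left hmono (inv_nonneg.2 hV1.le))
    _ = 2 ^ n * (((volume (ball c (2*r))).toReal)⁻¹ *
        ∫ x in ball c (2*r), |b x - avgBall b c (2*r)|) := by
        rw [vol_double c hr, mul_inv]
        field_simp

variable {b : EuclideanSpace ℝ (Fin n) → ℝ} {M₁ M₂ : ℝ}

lemma step_bound (hb : LocallyIntegrable b volume)
    (hbmo1 : ∀ (c : EuclideanSpace ℝ (Fin n)) (r : ℝ), 0 < r → volume (ball c r) ≤ 1 →
      ((volume (ball c r)).toReal)⁻¹ * ∫ x in ball c r, |b x - avgBall b c r| ≤ M₁)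
    (hbmo2 : ∀ (c : EuclideanSpace ℝ (Fin n)) (r : ℝ), 0 < r → 1 ≤ volume (ball c r) →
      ((volume (ball c r)).toReal)⁻¹ * ∫ x in ball c r, |b x| ≤ M₂)
    (hM₁ : 0 ≤ M₁) (hM₂ : 0 ≤ M₂)
    (c : EuclideanSpace ℝ (Fin n)) {r : ℝ} (hr : 0 < r) :
    ((volume (ball c r)).toReal)⁻¹ * ∫ x in ball c r, |b x - avgBall b c r| ≤ M₁ + 2 * M₂ := by
  rcases le_total (volume (ball c r)) 1 with h | h
  · linarith [hbmo1 c r hr h]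
  · have h0 := osc_le hr (intOn hb c r) 0
    simp only [sub_zero] at h0
    linarith [hbmo2 c r hr h, h0]

lemma chain (hb : LocallyIntegrable b volume)
    (hbmo1 : ∀ (c : EuclideanSpace ℝ (Fin n)) (r : ℝ), 0 < r → volume (ball c r) ≤ 1 →
      ((volume (ball c r)).toReal)⁻¹ * ∫ x in ball c r, |b x - avgBall b c r| ≤ M₁)
    (hbmo2 : ∀ (c : EuclideanSpace ℝ (Fin n)) (r : ℝ), 0 < r → 1 ≤ volume (ball c r) →
      ((volume (ball c r)).toReal)⁻¹ * ∫ x in ball c r, |b x| ≤ M₂)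
    (hM₁ : 0 ≤ M₁) (hM₂ : 0 ≤ M₂)
    (c : EuclideanSpace ℝ (Fin n)) {r : ℝ} (hr : 0 < r) (k : ℕ) :
    |avgBall b c r| ≤ k * (2 ^ n * (M₁ + 2 * M₂)) + |avgBall b c ((2:ℝ) ^ k * r)| := by
  induction k with
  | zero => simp
  | succ k ih =>
    have hrk : 0 < (2:ℝ) ^ k * r := by positivity
    have step := avg_double hrk (intOn hb c _) (intOn hb c _)
    have osc := step_bound hb hbmo1 hbmo2 hM₁ hM₂ c (by positivity : 0 < 2 * ((2:ℝ) ^ k * r))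
    have h2 : (2:ℝ) ^ (k+1) * r = 2 * ((2:ℝ) ^ k * r) := by ring
    have h2n : (0:ℝ) ≤ 2 ^ n := by positivity
    have hstep : |avgBall b c ((2:ℝ) ^ k * r)| ≤
        2 ^ n * (M₁ + 2 * M₂) + |avgBall b c ((2:ℝ) ^ (k+1) * r)| := by
      rw [h2]
      have tri : |avgBall b c ((2:ℝ) ^ k * r)| ≤
          |avgBall b c ((2:ℝ) ^ k * r) - avgBall b c (2 * ((2:ℝ) ^ k * r))| +
            |avgBall b c (2 * ((2:ℝ) ^ k * r))| := by
        have := abs_add_le (avgBall b c ((2:ℝ) ^ k * r) - avgBall b c (2 * ((2:ℝ) ^ k * r)))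
          (avgBall b c (2 * ((2:ℝ) ^ k * r)))
        simpa using this
      refine tri.trans (add_le_add_left ?_ _)
      exact step.trans (mul_le_mul_of_nonneg_left osc h2n)
    push_cast
    nlinarith [ih, hstep]

lemma avg_abs_le (hn : 1 ≤ n) (hb : LocallyIntegrable b volume)
    (hbmo1 : ∀ (c : EuclideanSpace ℝ (Fin n)) (r : ℝ), 0 < r → volume (ball c r) ≤ 1 →
      ((volume (ball c r)).toReal)⁻¹ * ∫ x in ball c r, |b x - avgBall b c r| ≤ M₁)
    (hbmo2 : ∀ (c : EuclideanSpace ℝ (Fin n)) (r : ℝ), 0 < r → 1 ≤ volume (ball c r) →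
      ((volume (ball c r)).toReal)⁻¹ * ∫ x in ball c r, |b x| ≤ M₂)
    (hM₁ : 0 ≤ M₁) (hM₂ : 0 ≤ M₂)
    (c : EuclideanSpace ℝ (Fin n)) {r : ℝ} (hr : 0 < r)
    (hsmall : volume (ball c r) ≤ 1) :
    |avgBall b c r| ≤ Real.log (Real.exp 1 + ((volume (ball c r)).toReal)⁻¹) *
      ((6 * 2 ^ n + 1) * (M₁ + M₂)) := by
  set V := (volume (ball c r)).toReal with hVdef
  have hV0 : 0 < V := volpos c hr
  have hV1 : V ≤ 1 := by
    have := ENNReal.toReal_mono ENNReal.one_ne_top hsmall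
    simpa using this
  set L := Real.log (Real.exp 1 + V⁻¹) with hLdef
  have hL1 : 1 ≤ L := by
    rw [hLdef]
    calc (1:ℝ) = Real.log (Real.exp 1) := (Real.log_exp 1).symm
      _ ≤ Real.log (Real.exp 1 + V⁻¹) :=
        Real.log_le_log (Real.exp_pos 1) (le_add_of_nonneg_right (by positivity))
  set k := ⌈Real.log V⁻¹ / Real.log 2⌉₊ with hkdef
  have hlogV : 0 ≤ Real.log V⁻¹ := Real.log_nonneg ((one_le_inv₀ hV0).2 hV1)
  have hlog2 : 0 < Real.log 2 := Real.log_pos one_lt_two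
  have hx : 0 ≤ Real.log V⁻¹ / Real.log 2 := div_nonneg hlogV hlog2.le
  have hk2 : V⁻¹ ≤ 2 ^ k := by
    have h1 : Real.log V⁻¹ / Real.log 2 ≤ (k : ℝ) := Nat.le_ceil _
    have h1' : Real.log V⁻¹ ≤ (k : ℝ) * Real.log 2 := (div_le_iff₀ hlog2).1 h1
    have h2' : Real.log V⁻¹ ≤ Real.log ((2:ℝ) ^ k) := by
      rw [Real.log_pow]; exact_mod_cast h1'
    exact (Real.log_le_log_iff (by positivity) (by positivity)).1 h2'
  have hkL : (k : ℝ) ≤ 3 * L := by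
    have hceil : (k : ℝ) < Real.log V⁻¹ / Real.log 2 + 1 := Nat.ceil_lt_add_one hx
    have hdiv : Real.log V⁻¹ / Real.log 2 ≤ 2 * Real.log V⁻¹ := by
      rw [div_le_iff₀ hlog2]
      nlinarith [Real.log_two_gt_d9, hlogV]
    have hlogL : Real.log V⁻¹ ≤ L := by
      rw [hLdef]
      exact Real.log_le_log (by positivity) (le_add_of_nonneg_left (Real.exp_pos 1).le)
    linarith
  have hbig : 1 ≤ volume (ball c ((2:ℝ) ^ k * r)) := by
    have hv : (volume (ball c ((2:ℝ) ^ k * r))).toReal = ((2:ℝ) ^ n) ^ k * V := vol_pow c hr k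
    have h2n2 : (2:ℝ) ≤ 2 ^ n := by
      calc (2:ℝ) = 2 ^ 1 := (pow_one 2).symm
        _ ≤ 2 ^ n := pow_le_pow_right₀ one_le_two hn
    have hpow : (2:ℝ) ^ k ≤ ((2:ℝ) ^ n) ^ k := pow_le_pow_left₀ (by norm_num) h2n2 k
    have h2 : (1:ℝ) ≤ ((2:ℝ) ^ n) ^ k * V := by
      have : (1:ℝ) = V⁻¹ * V := by field_simp
      rw [this]
      exact mul_le_mul_of_nonneg_right (hk2.trans hpow) hV0.le
    rw [← ENNReal.ofReal_toReal (measure_ball_lt_top).ne, hv]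
    exact ENNReal.one_le_ofReal.2 h2
  have hAk : |avgBall b c ((2:ℝ) ^ k * r)| ≤ M₂ := by
    have h := abs_avg_sub_le (show 0 < (2:ℝ) ^ k * r by positivity) (intOn hb c _) 0
    simp only [sub_zero] at h
    exact h.trans (hbmo2 c _ (by positivity) hbig)
  have hchain := chain hb hbmo1 hbmo2 hM₁ hM₂ c hr k
  have h2n : (0:ℝ) < 2 ^ n := by positivity
  have hS : (0:ℝ) ≤ 2 ^ n * (M₁ + 2 * M₂) := by positivity
  have p1 : (k : ℝ) * (2 ^ n * (M₁ + 2 * M₂)) ≤ 3 * L * (2 ^ n * (M₁ + 2 * M₂)) :=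
    mul_le_mul_of_nonneg_right hkL hS
  have p2 : M₁ + M₂ ≤ L * (M₁ + M₂) := le_mul_of_one_le_left (by linarith) hL1
  nlinarith [hchain, hAk, p1, p2, mul_nonneg (mul_nonneg (by linarith : (0:ℝ) ≤ L) h2n.le) hM₁]

end Aux

set_option maxHeartbeats 2000000 in
/-- If φ is bounded and lies in lmo(ℝⁿ), then multiplication by φ maps bmo(ℝⁿ)
to bmo(ℝⁿ), with ‖bφ‖_{bmo} ≤ C(‖φ‖_∞ + ‖φ‖_{lmo})‖b‖_{bmo}. -/
theorem lmo_mult_bmo (n : ℕ) (hn : 1 ≤ n) :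
    ∃ C > (0 : ℝ), ∀ (φ b : EuclideanSpace ℝ (Fin n) → ℝ) (Nφ L₁ L₂ M₁ M₂ : ℝ),
      LocallyIntegrable φ volume → LocallyIntegrable b volume →
      (∀ x, |φ x| ≤ Nφ) →
      -- φ ∈ lmo : logarithmically weighted small-ball oscillation, large-ball means
      (∀ (c : EuclideanSpace ℝ (Fin n)) (r : ℝ), 0 < r → volume (ball c r) ≤ 1 →
        Real.log (Real.exp 1 + ((volume (ball c r)).toReal)⁻¹) *
          (((volume (ball c r)).toReal)⁻¹ *
            ∫ x in ball c r, |φ x - avgBall φ c r|) ≤ L₁) →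
      (∀ (c : EuclideanSpace ℝ (Fin n)) (r : ℝ), 0 < r → 1 ≤ volume (ball c r) →
        ((volume (ball c r)).toReal)⁻¹ * ∫ x in ball c r, |φ x| ≤ L₂) →
      -- b ∈ bmo
      (∀ (c : EuclideanSpace ℝ (Fin n)) (r : ℝ), 0 < r → volume (ball c r) ≤ 1 →
        ((volume (ball c r)).toReal)⁻¹ * ∫ x in ball c r, |b x - avgBall b c r| ≤ M₁) →
      (∀ (c : EuclideanSpace ℝ (Fin n)) (r : ℝ), 0 < r → 1 ≤ volume (ball c r) →
        ((volume (ball c r)).toReal)⁻¹ * ∫ x in ball c r, |b x| ≤ M₂) →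
      -- conclusion : bφ ∈ bmo with the product norm bound
      LocallyIntegrable (fun x => b x * φ x) volume ∧
      (∀ (c : EuclideanSpace ℝ (Fin n)) (r : ℝ), 0 < r → volume (ball c r) ≤ 1 →
        ((volume (ball c r)).toReal)⁻¹ *
            ∫ x in ball c r, |b x * φ x - avgBall (fun y => b y * φ y) c r| ≤
          C * (Nφ + L₁ + L₂) * (M₁ + M₂)) ∧
      (∀ (c : EuclideanSpace ℝ (Fin n)) (r : ℝ), 0 < r → 1 ≤ volume (ball c r) →
        ((volume (ball c r)).toReal)⁻¹ * ∫ x in ball c r, |b x * φ x| ≤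
          C * (Nφ + L₁ + L₂) * (M₁ + M₂)) := by
  set C₁ : ℝ := 6 * 2 ^ n + 1 with hC₁
  refine ⟨2 * C₁ + 3, by positivity, ?_⟩
  intro φ b Nφ L₁ L₂ M₁ M₂ hφ hb hφbd hlmo1 hlmo2 hbmo1 hbmo2
  -- existence of small and large balls, to derive nonnegativity of the constants
  set V₁ : ℝ := (volume (ball (0 : EuclideanSpace ℝ (Fin n)) 1)).toReal with hV₁
  have hV₁0 : 0 < V₁ := volpos _ one_pos
  obtain ⟨rs, hrs, hrsmall⟩ :
      ∃ rs > (0:ℝ), volume (ball (0 : EuclideanSpace ℝ (Fin n)) rs) ≤ 1 := by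
    refine ⟨min 1 V₁⁻¹, by positivity, ?_⟩
    have hle1 : min 1 V₁⁻¹ ≤ 1 := min_le_left _ _
    have hle2 : min 1 V₁⁻¹ ≤ V₁⁻¹ := min_le_right _ _
    have h0 : 0 < min 1 V₁⁻¹ := by positivity
    have hv : (volume (ball (0 : EuclideanSpace ℝ (Fin n)) (min 1 V₁⁻¹))).toReal
        = (min 1 V₁⁻¹) ^ n * V₁ := vol_eq _ h0
    have hpow : (min 1 V₁⁻¹) ^ n ≤ min 1 V₁⁻¹ := by
      calc (min 1 V₁⁻¹) ^ n ≤ (min 1 V₁⁻¹) ^ 1 := pow_le_pow_of_le_one h0.le hle1 hn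
        _ = min 1 V₁⁻¹ := pow_one _
    have : (volume (ball (0 : EuclideanSpace ℝ (Fin n)) (min 1 V₁⁻¹))).toReal ≤ 1 := by
      rw [hv]
      calc (min 1 V₁⁻¹) ^ n * V₁ ≤ V₁⁻¹ * V₁ :=
        mul_le_mul_of_nonneg_right (hpow.trans hle2) hV₁0.le
        _ = 1 := by field_simp
    rw [← ENNReal.ofReal_toReal (measure_ball_lt_top).ne]
    exact ENNReal.ofReal_le_one.2 this
  obtain ⟨rb, hrb, hrbig⟩ :
      ∃ rb > (0:ℝ), 1 ≤ volume (ball (0 : EuclideanSpace ℝ (Fin n)) rb) := by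
    refine ⟨max 1 V₁⁻¹, by positivity, ?_⟩
    have hge1 : 1 ≤ max 1 V₁⁻¹ := le_max_left _ _
    have hge2 : V₁⁻¹ ≤ max 1 V₁⁻¹ := le_max_right _ _
    have h0 : 0 < max 1 V₁⁻¹ := by positivity
    have hv : (volume (ball (0 : EuclideanSpace ℝ (Fin n)) (max 1 V₁⁻¹))).toReal
        = (max 1 V₁⁻¹) ^ n * V₁ := vol_eq _ h0
    have hpow : max 1 V₁⁻¹ ≤ (max 1 V₁⁻¹) ^ n := le_self_pow₀ hge1 (by omega)
    have : (1:ℝ) ≤ (volume (ball (0 : EuclideanSpace ℝ (Fin n)) (max 1 V₁⁻¹))).toReal := by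
      rw [hv]
      calc (1:ℝ) = V₁⁻¹ * V₁ := by field_simp
        _ ≤ (max 1 V₁⁻¹) ^ n * V₁ :=
          mul_le_mul_of_nonneg_right (hge2.trans hpow) hV₁0.le
    rw [← ENNReal.ofReal_toReal (measure_ball_lt_top).ne]
    exact ENNReal.one_le_ofReal.2 this
  have avg_nonneg : ∀ (f : EuclideanSpace ℝ (Fin n) → ℝ) (c : EuclideanSpace ℝ (Fin n)) (r : ℝ),
      0 ≤ ((volume (ball c r)).toReal)⁻¹ * ∫ x in ball c r, |f x| := by
    intro f c r
    exact mul_nonneg (inv_nonneg.2 ENNReal.toReal_nonneg)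
      (integral_nonneg fun x => abs_nonneg _)
  have hNφ0 : 0 ≤ Nφ := (abs_nonneg _).trans (hφbd 0)
  have hM₁0 : 0 ≤ M₁ := le_trans (avg_nonneg _ _ _) (hbmo1 0 rs hrs hrsmall)
  have hM₂0 : 0 ≤ M₂ := le_trans (avg_nonneg _ _ _) (hbmo2 0 rb hrb hrbig)
  have hL₂0 : 0 ≤ L₂ := le_trans (avg_nonneg _ _ _) (hlmo2 0 rb hrb hrbig)
  have hL₁0 : 0 ≤ L₁ := by
    refine le_trans ?_ (hlmo1 0 rs hrs hrsmall)
    have h1 : (1:ℝ) ≤ Real.log (Real.exp 1 + ((volume (ball (0:EuclideanSpace ℝ (Fin n)) rs)).toReal)⁻¹) := by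
      calc (1:ℝ) = Real.log (Real.exp 1) := (Real.log_exp 1).symm
        _ ≤ _ := Real.log_le_log (Real.exp_pos 1)
          (le_add_of_nonneg_right (by positivity))
    exact mul_nonneg (by linarith) (avg_nonneg _ _ _)
  have hC₁0 : (0:ℝ) < C₁ := by rw [hC₁]; positivity
  -- local integrability of the product
  have hbφ : LocallyIntegrable (fun x => b x * φ x) volume := by
    rw [MeasureTheory.locallyIntegrable_iff]
    intro K hK
    refine Integrable.mono' ((hb.integrableOn_isCompact hK).norm.const_mul Nφ)
      ((hb.aestronglyMeasurable.mul hφ.aestronglyMeasurable).restrict) ?_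
    filter_upwards with x
    rw [norm_mul]
    exact mul_le_mul_of_nonneg_left ((Real.norm_eq_abs _).symm ▸ hφbd x) (norm_nonneg _) |>.trans
      (by rw [mul_comm])
  refine ⟨hbφ, ?_, ?_⟩
  · -- small balls
    intro c r hr hsmall
    set V := (volume (ball c r)).toReal with hVdef
    have hV0 : 0 < V := volpos c hr
    set L := Real.log (Real.exp 1 + V⁻¹) with hLdef
    have hL1 : 1 ≤ L := by
      rw [hLdef]
      calc (1:ℝ) = Real.log (Real.exp 1) := (Real.log_exp 1).symm
        _ ≤ _ := Real.log_le_log (Real.exp_pos 1) (le_add_of_nonneg_right (by positivity))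
    set Ab := avgBall b c r with hAb
    set Aφ := avgBall φ c r with hAφ
    have havgb : |Ab| ≤ L * (C₁ * (M₁ + M₂)) := by
      have := avg_abs_le hn hb hbmo1 hbmo2 hM₁0 hM₂0 c hr hsmall
      rw [← hVdef, ← hLdef, ← hC₁] at this
      exact this.trans_eq (by ring)
    -- pointwise bound and integration
    set d := Ab * Aφ with hd
    have hIb : IntegrableOn (fun x => |b x - Ab|) (ball c r) volume :=
      ((intOn hb c r).sub (constIntOn c r Ab)).abs
    have hIφ : IntegrableOn (fun x => |φ x - Aφ|) (ball c r) volume :=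
      ((intOn hφ c r).sub (constIntOn c r Aφ)).abs
    have hIbφ : IntegrableOn (fun x => |b x * φ x - d|) (ball c r) volume :=
      ((intOn hbφ c r).sub (constIntOn c r d)).abs
    have hpt : ∀ x ∈ ball c r, |b x * φ x - d| ≤ Nφ * |b x - Ab| + |Ab| * |φ x - Aφ| := by
      intro x _
      have hsplit : b x * φ x - d = φ x * (b x - Ab) + Ab * (φ x - Aφ) := by
        rw [hd]; ring
      calc |b x * φ x - d| = |φ x * (b x - Ab) + Ab * (φ x - Aφ)| := by rw [hsplit]
        _ ≤ |φ x * (b x - Ab)| + |Ab * (φ x - Aφ)| := abs_add_le _ _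
        _ = |φ x| * |b x - Ab| + |Ab| * |φ x - Aφ| := by rw [abs_mul, abs_mul]
        _ ≤ Nφ * |b x - Ab| + |Ab| * |φ x - Aφ| := by
            exact add_le_add_left (mul_le_mul_of_nonneg_right (hφbd x) (abs_nonneg _)) _
    have hI : ∫ x in ball c r, |b x * φ x - d| ≤
        Nφ * (∫ x in ball c r, |b x - Ab|) + |Ab| * (∫ x in ball c r, |φ x - Aφ|) := by
      have hadd : IntegrableOn (fun x => Nφ * |b x - Ab| + |Ab| * |φ x - Aφ|)
          (ball c r) volume := by exact (hIb.const_mul Nφ).add (hIφ.const_mul |Ab|)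
      have := setIntegral_mono_on hIbφ hadd measurableSet_ball hpt
      rwa [integral_add (hIb.const_mul Nφ) (hIφ.const_mul |Ab|),
        integral_const_mul, integral_const_mul] at this
    have hosc := osc_le hr (intOn hbφ c r) d
    have hVinv : (0:ℝ) ≤ V⁻¹ := by positivity
    have hIφnn : (0:ℝ) ≤ V⁻¹ * ∫ x in ball c r, |φ x - Aφ| :=
      mul_nonneg hVinv (integral_nonneg fun x => abs_nonneg _)
    have hIbnn : (0:ℝ) ≤ ∫ x in ball c r, |b x - Ab| :=
      integral_nonneg fun x => abs_nonneg _
    have hbmosmall := hbmo1 c r hr hsmall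
    have hlmosmall := hlmo1 c r hr hsmall
    rw [← hVdef] at hbmosmall
    rw [← hVdef, ← hLdef, ← hAφ] at hlmosmall
    rw [← hAb] at hbmosmall
    -- combine
    have step1 : V⁻¹ * ∫ x in ball c r, |b x * φ x - d| ≤
        Nφ * (V⁻¹ * ∫ x in ball c r, |b x - Ab|) +
          |Ab| * (V⁻¹ * ∫ x in ball c r, |φ x - Aφ|) := by
      calc V⁻¹ * ∫ x in ball c r, |b x * φ x - d|
          ≤ V⁻¹ * (Nφ * (∫ x in ball c r, |b x - Ab|) + |Ab| * (∫ x in ball c r, |φ x - Aφ|)) :=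
            mul_le_mul_of_nonneg_left hI hVinv
        _ = Nφ * (V⁻¹ * ∫ x in ball c r, |b x - Ab|) +
            |Ab| * (V⁻¹ * ∫ x in ball c r, |φ x - Aφ|) := by ring
    have cross : |Ab| * (V⁻¹ * ∫ x in ball c r, |φ x - Aφ|) ≤ C₁ * (M₁ + M₂) * L₁ := by
      calc |Ab| * (V⁻¹ * ∫ x in ball c r, |φ x - Aφ|)
          ≤ L * (C₁ * (M₁ + M₂)) * (V⁻¹ * ∫ x in ball c r, |φ x - Aφ|) :=
            mul_le_mul_of_nonneg_right havgb hIφnn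
        _ = C₁ * (M₁ + M₂) * (L * (V⁻¹ * ∫ x in ball c r, |φ x - Aφ|)) := by ring
        _ ≤ C₁ * (M₁ + M₂) * L₁ :=
            mul_le_mul_of_nonneg_left hlmosmall (by positivity)
    have main : V⁻¹ * ∫ x in ball c r, |b x * φ x - avgBall (fun y => b y * φ y) c r| ≤
        2 * (Nφ * M₁ + C₁ * (M₁ + M₂) * L₁) := by
      have t1 : Nφ * (V⁻¹ * ∫ x in ball c r, |b x - Ab|) ≤ Nφ * M₁ :=
        mul_le_mul_of_nonneg_left hbmosmall hNφ0
      have := hosc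
      rw [← hVdef] at this
      calc V⁻¹ * ∫ x in ball c r, |b x * φ x - avgBall (fun y => b y * φ y) c r|
          ≤ 2 * (V⁻¹ * ∫ x in ball c r, |b x * φ x - d|) := this
        _ ≤ 2 * (Nφ * M₁ + C₁ * (M₁ + M₂) * L₁) := by linarith [step1, cross, t1]
    refine main.trans ?_
    nlinarith [mul_nonneg hNφ0 hM₂0, mul_nonneg hL₁0 hM₁0, mul_nonneg hL₁0 hM₂0,
      mul_nonneg hL₂0 (add_nonneg hM₁0 hM₂0), mul_nonneg hNφ0 hM₁0,
      mul_nonneg (mul_nonneg hC₁0.le hL₁0) (add_nonneg hM₁0 hM₂0),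
      mul_nonneg (add_nonneg (add_nonneg hNφ0 hL₁0) hL₂0) (add_nonneg hM₁0 hM₂0)]
  · -- big balls
    intro c r hr hbig
    set V := (volume (ball c r)).toReal with hVdef
    have hV0 : 0 < V := volpos c hr
    have hVinv : (0:ℝ) ≤ V⁻¹ := by positivity
    have hI : ∫ x in ball c r, |b x * φ x| ≤ Nφ * ∫ x in ball c r, |b x| := by
      have := setIntegral_mono_on ((intOn hbφ c r).abs) (((intOn hb c r).abs).const_mul Nφ)
        measurableSet_ball (fun x _ => by
          rw [abs_mul]
          exact (mul_le_mul_of_nonneg_left (hφbd x) (abs_nonneg _)).trans_eq (mul_comm _ _))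
      rwa [integral_const_mul] at this
    have hbbig := hbmo2 c r hr hbig
    rw [← hVdef] at hbbig
    have step : V⁻¹ * ∫ x in ball c r, |b x * φ x| ≤ Nφ * M₂ := by
      calc V⁻¹ * ∫ x in ball c r, |b x * φ x| ≤ V⁻¹ * (Nφ * ∫ x in ball c r, |b x|) :=
          mul_le_mul_of_nonneg_left hI hVinv
        _ = Nφ * (V⁻¹ * ∫ x in ball c r, |b x|) := by ring
        _ ≤ Nφ * M₂ := mul_le_mul_of_nonneg_left hbbig hNφ0
    refine step.trans ?_
    have h1 : Nφ * M₂ ≤ (Nφ + L₁ + L₂) * (M₁ + M₂) := by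
      nlinarith [mul_nonneg hNφ0 hM₁0, mul_nonneg hL₁0 hM₁0, mul_nonneg hL₁0 hM₂0,
        mul_nonneg hL₂0 hM₁0, mul_nonneg hL₂0 hM₂0]
    have h2a : (0:ℝ) ≤ (Nφ + L₁ + L₂) * (M₁ + M₂) :=
      mul_nonneg (add_nonneg (add_nonneg hNφ0 hL₁0) hL₂0) (add_nonneg hM₁0 hM₂0)
    have h2b : (1:ℝ) ≤ 2 * C₁ + 3 := by linarith [hC₁0]
    have h2 : (Nφ + L₁ + L₂) * (M₁ + M₂) ≤ (2 * C₁ + 3) * ((Nφ + L₁ + L₂) * (M₁ + M₂)) :=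
      le_mul_of_one_le_left h2a h2b
    rw [mul_assoc]
    exact h1.trans h2
end

section
/- Suppose φ is locally integrable on ℝⁿ and for every b ∈ bmo(ℝⁿ) the product bφ is in bmo(ℝⁿ) with ‖bφ‖_{bmo} ≤ C‖b‖_{bmo} for a fixed constant C. Then φ ∈ L^∞(ℝⁿ) with ‖φ‖_∞ ≤ C′ C for a dimensional constant C′. -/
open Real MeasureTheory Metric

/-- "b is in bmo(ℝⁿ) with norm at most M". -/
def BmoLE {n : ℕ} (b : EuclideanSpace ℝ (Fin n) → ℝ) (M : ℝ) : Prop :=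
  (∀ (c : EuclideanSpace ℝ (Fin n)) (r : ℝ), 0 < r → volume (ball c r) ≤ 1 →
    ((volume (ball c r)).toReal)⁻¹ * ∫ x in ball c r, |b x - avgBall b c r| ≤ M) ∧
  (∀ (c : EuclideanSpace ℝ (Fin n)) (r : ℝ), 0 < r → 1 ≤ volume (ball c r) →
    ((volume (ball c r)).toReal)⁻¹ * ∫ x in ball c r, |b x| ≤ M)

/-- If multiplication by φ is bounded on bmo(ℝⁿ) with constant C,
then φ is essentially bounded by C′C, with C′ dimensional. -/
theorem bmo_multiplier_bounded (n : ℕ) (hn : 1 ≤ n) :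
    ∃ C' > (0 : ℝ), ∀ (φ : EuclideanSpace ℝ (Fin n) → ℝ) (C : ℝ), 0 < C →
      LocallyIntegrable φ volume →
      (∀ (b : EuclideanSpace ℝ (Fin n) → ℝ) (M : ℝ), 0 ≤ M →
        LocallyIntegrable b volume → BmoLE b M →
        LocallyIntegrable (fun x => b x * φ x) volume ∧
          BmoLE (fun x => b x * φ x) (C * M)) →
      ∀ᵐ x ∂(volume : Measure (EuclideanSpace ℝ (Fin n))), |φ x| ≤ C' * C := by
  refine ⟨1, one_pos, ?_⟩
  intro φ C hC hφ hmul
  haveI : Nonempty (Fin n) := Fin.pos_iff_nonempty.mp hn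
  -- the constant 1 is in bmo with norm 1
  have hone : BmoLE (fun _ : EuclideanSpace ℝ (Fin n) => (1:ℝ)) 1 := by
    constructor
    · intro c r hr hvol
      have hpos : 0 < (volume (ball c r)).toReal :=
        ENNReal.toReal_pos (measure_ball_pos volume c hr).ne' measure_ball_lt_top.ne
      have havg : avgBall (fun _ => (1:ℝ)) c r = 1 := by
        simp [avgBall, measureReal_def, inv_mul_cancel₀ hpos.ne']
      rw [havg]
      simp
    · intro c r hr hvol
      have hpos : 0 < (volume (ball c r)).toReal :=
        ENNReal.toReal_pos (measure_ball_pos volume c hr).ne' measure_ball_lt_top.ne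
      simp [measureReal_def, inv_mul_cancel₀ hpos.ne']
  -- powers of φ are in bmo with norm C^k
  have hpow : ∀ k : ℕ, LocallyIntegrable (fun x => φ x ^ k) volume ∧
      BmoLE (fun x => φ x ^ k) (C ^ k) := by
    intro k
    induction k with
    | zero =>
      simp only [pow_zero]
      exact ⟨locallyIntegrable_const 1, hone⟩
    | succ k ih =>
      have h := hmul (fun x => φ x ^ k) (C ^ k) (pow_nonneg hC.le k) ih.1 ih.2
      simp only [← pow_succ, ← pow_succ'] at h
      exact h
  -- a radius making the ball have volume at least 1
  set c0 : ℝ := Real.sqrt π ^ n / Real.Gamma ((n:ℝ) / 2 + 1) with hc0def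
  have hc0 : 0 < c0 := div_pos (pow_pos (Real.sqrt_pos.mpr Real.pi_pos) n)
    (Real.Gamma_pos_of_pos (by positivity))
  set R : ℝ := max 1 c0⁻¹ with hRdef
  have hR1 : (1:ℝ) ≤ R := le_max_left _ _
  have hRc : c0⁻¹ ≤ R := le_max_right _ _
  have hball : ∀ m : ℕ, 1 ≤ volume (ball (0 : EuclideanSpace ℝ (Fin n)) (R + m)) := by
    intro m
    have hrm : (1:ℝ) ≤ R + m := le_add_of_le_of_nonneg hR1 m.cast_nonneg
    rw [EuclideanSpace.volume_ball]
    simp only [Fintype.card_fin]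
    have h1 : (1:ENNReal) ≤ ENNReal.ofReal ((R+m) * c0) := by
      rw [ENNReal.one_le_ofReal]
      calc (1:ℝ) = c0⁻¹ * c0 := (inv_mul_cancel₀ hc0.ne').symm
        _ ≤ (R+m) * c0 := by
            apply mul_le_mul_of_nonneg_right _ hc0.le
            exact hRc.trans (le_add_of_nonneg_right m.cast_nonneg)
    calc (1:ENNReal) ≤ ENNReal.ofReal ((R+m)*c0) := h1
      _ = ENNReal.ofReal (R+m) * ENNReal.ofReal c0 := ENNReal.ofReal_mul (by linarith)
      _ ≤ ENNReal.ofReal (R+m) ^ n * ENNReal.ofReal c0 := by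
          apply mul_le_mul_left
          exact le_self_pow₀ (ENNReal.one_le_ofReal.mpr hrm) (by omega)
  -- measurable representative of φ
  obtain ⟨ψ, hψm, hφψ⟩ := hφ.aestronglyMeasurable
  -- Chebyshev: φ can't exceed C + C/(j+1) on a set of positive measure in a big ball
  have key : ∀ (m j : ℕ),
      volume ({x : EuclideanSpace ℝ (Fin n) | C + C / ((j:ℝ)+1) ≤ |ψ x|}
        ∩ ball (0:EuclideanSpace ℝ (Fin n)) (R + m)) = 0 := by
    intro m j
    set a : ℝ := C + C / ((j:ℝ)+1) with ha
    have haC : C < a := lt_add_of_pos_right _ (by positivity)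
    have ha0 : 0 < a := hC.trans haC
    set B := ball (0:EuclideanSpace ℝ (Fin n)) (R + m) with hB
    have hrpos : (0:ℝ) < R + m := by
      have := m.cast_nonneg (α := ℝ); linarith
    have hvB : 1 ≤ volume B := hball m
    have hBfin : volume B < ⊤ := measure_ball_lt_top
    set V := (volume B).toReal with hV
    have hV1 : (1:ℝ) ≤ V := by
      have := ENNReal.toReal_mono hBfin.ne hvB
      simpa using this
    have hVpos : 0 < V := lt_of_lt_of_le one_pos hV1
    set S := {x : EuclideanSpace ℝ (Fin n) | a ≤ |ψ x|} ∩ B with hS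
    have hSm : MeasurableSet S :=
      (measurableSet_le measurable_const hψm.measurable.abs).inter measurableSet_ball
    have hSB : volume S ≤ volume B := measure_mono Set.inter_subset_right
    have hSfin : volume S < ⊤ := lt_of_le_of_lt hSB hBfin
    have hkey : ∀ k : ℕ, (volume S).toReal * a ^ k ≤ V * C ^ k := by
      intro k
      have hint : IntegrableOn (fun x => φ x ^ k) B volume :=
        ((hpow k).1.integrableOn_isCompact (isCompact_closedBall _ _)).mono_set
          ball_subset_closedBall
      have hintψ : IntegrableOn (fun x => |ψ x| ^ k) B volume := by
        refine hint.abs.congr ?_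
        filter_upwards [ae_restrict_of_ae hφψ] with x hx
        rw [← abs_pow, hx]
      have h0 : ∫ _ in S, (a:ℝ) ^ k ∂volume = (volume S).toReal * a ^ k := by
        rw [setIntegral_const]; simp [measureReal_def, smul_eq_mul]
      have h1 : ∫ _ in S, (a:ℝ) ^ k ∂volume ≤ ∫ x in S, |ψ x| ^ k ∂volume := by
        apply setIntegral_mono_on (integrableOn_const hSfin.ne)
          (hintψ.mono_set Set.inter_subset_right) hSm
        intro x hx
        exact pow_le_pow_left₀ ha0.le hx.1 k
      have h2 : ∫ x in S, |ψ x| ^ k ∂volume ≤ ∫ x in B, |ψ x| ^ k ∂volume :=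
        setIntegral_mono_set hintψ
          (Filter.Eventually.of_forall fun x => pow_nonneg (abs_nonneg _) k)
          (HasSubset.Subset.eventuallyLE Set.inter_subset_right)
      have h3 : ∫ x in B, |ψ x| ^ k ∂volume = ∫ x in B, |φ x ^ k| ∂volume := by
        apply integral_congr_ae
        filter_upwards [ae_restrict_of_ae hφψ] with x hx
        rw [abs_pow, hx]
      have h4 : ∫ x in B, |φ x ^ k| ∂volume ≤ V * C ^ k := by
        have hb := (hpow k).2.2 0 (R+m) hrpos hvB
        have := mul_le_mul_of_nonneg_left hb hVpos.le
        calc ∫ x in B, |φ x ^ k| ∂volume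
            = V * (V⁻¹ * ∫ x in B, |φ x ^ k| ∂volume) := by
              rw [← mul_assoc, mul_inv_cancel₀ hVpos.ne', one_mul]
          _ ≤ V * C ^ k := this
      calc (volume S).toReal * a ^ k = ∫ _ in S, (a:ℝ) ^ k ∂volume := h0.symm
        _ ≤ ∫ x in S, |ψ x| ^ k ∂volume := h1
        _ ≤ ∫ x in B, |ψ x| ^ k ∂volume := h2
        _ = ∫ x in B, |φ x ^ k| ∂volume := h3
        _ ≤ V * C ^ k := h4
    have hq : C / a < 1 := (div_lt_one ha0).mpr haC
    have htend : Filter.Tendsto (fun k : ℕ => V * (C / a) ^ k) Filter.atTop (nhds 0) := by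
      simpa using (tendsto_pow_atTop_nhds_zero_of_lt_one (by positivity) hq).const_mul V
    have hle : (volume S).toReal ≤ 0 := by
      apply ge_of_tendsto htend
      apply Filter.Eventually.of_forall
      intro k
      have heq : V * (C / a) ^ k = (V * C ^ k) / a ^ k := by
        rw [div_pow]; ring
      rw [heq, le_div_iff₀ (pow_pos ha0 k)]
      exact hkey k
    have hz : (volume S).toReal = 0 := le_antisymm hle ENNReal.toReal_nonneg
    have := (ENNReal.toReal_eq_zero_iff _).mp hz
    exact this.resolve_right hSfin.ne
  -- the set where |ψ| > C is null
  have hTnull : volume {x : EuclideanSpace ℝ (Fin n) | C < |ψ x|} = 0 := by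
    have hsub : {x : EuclideanSpace ℝ (Fin n) | C < |ψ x|} ⊆
        ⋃ (m : ℕ), ⋃ (j : ℕ), ({x : EuclideanSpace ℝ (Fin n) | C + C / ((j:ℝ)+1) ≤ |ψ x|}
          ∩ ball (0:EuclideanSpace ℝ (Fin n)) (R + m)) := by
      intro x hx
      have hx' : C < |ψ x| := hx
      obtain ⟨m, hm⟩ := exists_nat_gt (‖x‖ - R)
      obtain ⟨j, hj⟩ := exists_nat_gt (C / (|ψ x| - C))
      simp only [Set.mem_iUnion]
      refine ⟨m, j, ?_, ?_⟩
      · have hd : 0 < |ψ x| - C := sub_pos.mpr hx'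
        have hj1 : C / (|ψ x| - C) < (j:ℝ)+1 := hj.trans (lt_add_one _)
        rw [div_lt_iff₀ hd] at hj1
        rw [mul_comm] at hj1
        have h5 : C / ((j:ℝ)+1) < |ψ x| - C := by
          rw [div_lt_iff₀ (by positivity)]
          exact hj1
        have : C + C / ((j:ℝ)+1) ≤ |ψ x| := by linarith
        exact this
      · rw [mem_ball, dist_zero_right]
        linarith
    exact measure_mono_null hsub
      (measure_iUnion_null fun m => measure_iUnion_null fun j => key m j)
  have hae : ∀ᵐ x ∂(volume : Measure (EuclideanSpace ℝ (Fin n))), |ψ x| ≤ C := by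
    rw [ae_iff]
    simpa only [not_le] using hTnull
  filter_upwards [hae, hφψ] with x h1 h2
  rw [one_mul, h2]
  exact h1
end
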